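/- Let K ⊆ ℝⁿ be an origin-symmetric convex body whose modulus of smoothness satisfies ρ_K(τ) ≤ C·τ^q for all τ ∈ (0,1), with C, q > 1. Let ε ∈ (0, (8·C^{1/q})^{−q/(q−1)}] and δ = (1/4)·(ε/C)^{1/q}. Let p ∈ ℝⁿ with ‖p‖_K = 1, let f : ℝⁿ → ℝ be a linear functional with f(z) ≤ ‖z‖_K for all z and f(p) = 1, and set B_p = {x ∈ ℝⁿ : f(x) = 1 and ‖x − p‖_K ≤ δ}. Then every nonzero q ∈ K with ‖ q/‖q‖_K − p ‖_K ≤ δ − ε lies in the cylinder C_p = B_p + [0, −p] = {b − t·p : b ∈ B_p, t ∈ [0,1]}. -/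

import Mathlib

open Pointwise

/-- For an origin-symmetric convex body `K` with modulus of smoothness `ρ_K(τ) ≤ C τ^q`
(`C, q > 1`), `ε ≤ (8 C^{1/q})^{-q/(q-1)}`, `δ = (1/4)(ε/C)^{1/q}`, a boundary point `p`
(`‖p‖_K = 1`) with supporting functional `f`, and `B_p = {x : f(x) = 1, ‖x - p‖_K ≤ δ}`:
every nonzero `v ∈ K` whose normalization is `(δ - ε)`-close to `p` lies in the cylinder
`C_p = B_p + [0, -p]`. Here `‖·‖_K` is the gauge of `K`. -/
theorem stmt_11 (n : ℕ) (K : Set (Fin n → ℝ))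
    (hK_compact : IsCompact K) (hK_convex : Convex ℝ K)
    (hK_int : (interior K).Nonempty) (hK_symm : K = -K)
    (C q : ℝ) (hC : 1 < C) (hq : 1 < q)
    (hmod : ∀ τ ∈ Set.Ioo (0 : ℝ) 1, ∀ x y : Fin n → ℝ,
      gauge K x = 1 → gauge K y = 1 →
      gauge K (x + τ • y) + gauge K (x - τ • y) - 2 ≤ 2 * (C * τ ^ q))
    (ε : ℝ) (hε0 : 0 < ε) (hε1 : ε ≤ (8 * C ^ (1 / q)) ^ (-(q / (q - 1))))
    (δ : ℝ) (hδ : δ = (1 / 4) * (ε / C) ^ (1 / q))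
    (p : Fin n → ℝ) (hp : gauge K p = 1)
    (f : (Fin n → ℝ) →ₗ[ℝ] ℝ) (hf : ∀ z, f z ≤ gauge K z) (hfp : f p = 1) :
    ∀ v ∈ K, v ≠ 0 → gauge K ((gauge K v)⁻¹ • v - p) ≤ δ - ε →
      ∃ b : Fin n → ℝ, (f b = 1 ∧ gauge K (b - p) ≤ δ) ∧
        ∃ t ∈ Set.Icc (0 : ℝ) 1, v = b - t • p := by
  -- basic constants
  have hq0 : (0:ℝ) < q := lt_trans one_pos hq
  have hqne : q ≠ 0 := ne_of_gt hq0
  have hC0 : (0:ℝ) < C := lt_trans one_pos hC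
  -- ε < 1
  have hε_lt1 : ε < 1 := by
    refine lt_of_le_of_lt hε1 ?_
    have h1 : (1:ℝ) ≤ C ^ (1 / q) := Real.one_le_rpow hC.le (by positivity)
    have hbase : (1:ℝ) < 8 * C ^ (1 / q) := by nlinarith
    have hexp : -(q / (q - 1)) < 0 := by
      have : 0 < q / (q - 1) := div_pos hq0 (by linarith)
      linarith
    exact Real.rpow_lt_one_of_one_lt_of_neg hbase hexp
  -- 0 ∈ interior K
  have h0int : (0 : Fin n → ℝ) ∈ interior K := by
    obtain ⟨x, hx⟩ := hK_int
    have hx' : -x ∈ interior K := by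
      have h1 : -x ∈ (Homeomorph.neg (Fin n → ℝ)) ⁻¹' interior K := by simpa using hx
      rw [(Homeomorph.neg (Fin n → ℝ)).preimage_interior] at h1
      have h2 : (Homeomorph.neg (Fin n → ℝ)) ⁻¹' K = -K := rfl
      rw [h2, ← hK_symm] at h1
      exact h1
    have := hK_convex.interior hx hx' (by norm_num : (0:ℝ) ≤ (1:ℝ)/2)
      (by norm_num : (0:ℝ) ≤ (1:ℝ)/2) (by norm_num)
    simpa using this
  have hnhds : K ∈ nhds (0 : Fin n → ℝ) := mem_interior_iff_mem_nhds.mp h0int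
  have habs : Absorbent ℝ K := absorbent_nhds_zero hnhds
  have hbdd : Bornology.IsVonNBounded ℝ K :=
    hK_compact.totallyBounded.isVonNBounded ℝ
  have hsymm' : ∀ x ∈ K, -x ∈ K := by
    intro x hx
    rw [hK_symm]; simpa using hx
  have hgneg : ∀ x : Fin n → ℝ, gauge K (-x) = gauge K x := gauge_neg hsymm'
  have hgadd : ∀ x y : Fin n → ℝ, gauge K (x + y) ≤ gauge K x + gauge K y :=
    gauge_add_le hK_convex habs
  intro v hv hv0 hclose
  set g := gauge K v with hg
  have hgpos : 0 < g := (gauge_pos habs hbdd).mpr hv0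
  have hg1 : g ≤ 1 := gauge_le_one_of_mem hv
  set u := g⁻¹ • v with hu_def
  have hu1 : gauge K u = 1 := by
    rw [hu_def, gauge_smul_of_nonneg (by positivity)]
    rw [smul_eq_mul, ← hg, inv_mul_cancel₀ (ne_of_gt hgpos)]
  -- δ bounds
  have hδpos : 0 < δ := by rw [hδ]; positivity
  have hεC : ε / C < 1 := by
    rw [div_lt_one hC0]; linarith
  have hδlt : δ < 1 := by
    rw [hδ]
    have : (ε / C) ^ (1/q) ≤ 1 :=
      Real.rpow_le_one (by positivity) hεC.le (by positivity)
    nlinarith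
  -- 2 C δ ^ q ≤ ε
  have hδq : 2 * C * δ ^ q ≤ ε := by
    rw [hδ]
    have h1 : ((1:ℝ)/4 * (ε / C) ^ (1/q)) ^ q
        = ((1:ℝ)/4) ^ q * ((ε / C) ^ (1/q)) ^ q :=
      Real.mul_rpow (by norm_num) (by positivity)
    have h2 : ((ε / C) ^ (1/q)) ^ q = ε / C := by
      rw [← Real.rpow_mul (by positivity), one_div, inv_mul_cancel₀ hqne,
        Real.rpow_one]
    have h3 : ((1:ℝ)/4) ^ q ≤ (1:ℝ)/4 := by
      calc ((1:ℝ)/4) ^ q ≤ ((1:ℝ)/4) ^ (1:ℝ) :=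
            Real.rpow_le_rpow_of_exponent_ge (by norm_num) (by norm_num) hq.le
        _ = (1:ℝ)/4 := Real.rpow_one _
    rw [h1, h2]
    have h4 : 2 * C * (((1:ℝ)/4) ^ q * (ε / C)) = 2 * ((1:ℝ)/4) ^ q * ε := by
      field_simp
    rw [h4]
    have h5 : (0:ℝ) ≤ ((1:ℝ)/4) ^ q := Real.rpow_nonneg (by norm_num) _
    nlinarith
  -- key: 1 - f u ≤ ε
  have hτnn : 0 ≤ gauge K (u - p) := gauge_nonneg _
  have hkey : 1 - f u ≤ ε := by
    set τ := gauge K (u - p) with hτ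
    rcases eq_or_lt_of_le hτnn with h0 | hτpos
    · -- τ = 0
      have hfpu : f (p - u) ≤ 0 := by
        have := hf (p - u)
        have : gauge K (p - u) = τ := by
          rw [show p - u = -(u - p) by ring, hgneg]
        linarith [hf (p - u), this]
      have : f p - f u ≤ 0 := by rw [← map_sub]; exact hfpu
      rw [hfp] at this; linarith
    · -- τ > 0
      have hτlt1 : τ < 1 := by
        calc τ ≤ δ - ε := hclose
          _ < 1 := by linarith
      set y := τ⁻¹ • (u - p) with hy_def
      have hy1 : gauge K y = 1 := by
        rw [hy_def, gauge_smul_of_nonneg (by positivity), smul_eq_mul, ← hτ,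
          inv_mul_cancel₀ (ne_of_gt hτpos)]
      have hτy : τ • y = u - p := by
        rw [hy_def, smul_smul, mul_inv_cancel₀ (ne_of_gt hτpos), one_smul]
      have hsm := hmod τ ⟨hτpos, hτlt1⟩ p y hp hy1
      have hplus : gauge K (p + τ • y) = 1 := by rw [hτy]; simp [hu1]
      have hminus : gauge K (p - τ • y) ≤ 1 + 2 * (C * τ ^ q) := by
        rw [hplus] at hsm; linarith
      have hfm : f (p - τ • y) = 2 - f u := by
        rw [hτy, map_sub, map_sub, hfp]; ring
      have : 2 - f u ≤ 1 + 2 * (C * τ ^ q) := by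
        rw [← hfm]; exact le_trans (hf _) hminus
      have hτδ : τ ^ q ≤ δ ^ q := by
        apply Real.rpow_le_rpow hτpos.le ?_ hq0.le
        linarith [hclose]
      nlinarith
  -- assemble
  have hfu_le : f u ≤ 1 := by
    have := hf u; rw [hu1] at this; exact this
  have hfu_nn : 0 ≤ f u := by linarith
  have hfv : f v = g * f u := by
    rw [hu_def, map_smul, smul_eq_mul, ← mul_assoc,
      mul_inv_cancel₀ (ne_of_gt hgpos), one_mul]
  refine ⟨v + (1 - f v) • p, ⟨?_, ?_⟩, 1 - f v, ⟨?_, ?_⟩, by ring⟩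
  · rw [map_add, map_smul, smul_eq_mul, hfp]; ring
  · -- gauge bound
    have hb : v + (1 - f v) • p - p = g • (u - f u • p) := by
      rw [hu_def, hfv, smul_sub, smul_smul, smul_smul]
      rw [mul_inv_cancel₀ (ne_of_gt hgpos), one_smul]
      module
    rw [hb, gauge_smul_of_nonneg hgpos.le, smul_eq_mul]
    have hsplit : gauge K (u - f u • p) ≤ gauge K (u - p) + (1 - f u) := by
      have : u - f u • p = (u - p) + (1 - f u) • p := by module
      rw [this]
      calc gauge K ((u - p) + (1 - f u) • p)
          ≤ gauge K (u - p) + gauge K ((1 - f u) • p) := hgadd _ _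
        _ = gauge K (u - p) + (1 - f u) := by
            rw [gauge_smul_of_nonneg (by linarith), smul_eq_mul, hp, mul_one]
    have hle : gauge K (u - f u • p) ≤ δ := by
      calc gauge K (u - f u • p) ≤ gauge K (u - p) + (1 - f u) := hsplit
        _ ≤ (δ - ε) + ε := add_le_add hclose hkey
        _ = δ := by ring
    calc g * gauge K (u - f u • p) ≤ 1 * gauge K (u - f u • p) :=
          mul_le_mul_of_nonneg_right hg1 (gauge_nonneg _)
      _ = gauge K (u - f u • p) := one_mul _
      _ ≤ δ := hle
  · -- 0 ≤ 1 - f v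
    have : f v ≤ g := by rw [hfv]; nlinarith
    linarith
  · -- 1 - f v ≤ 1
    have : 0 ≤ f v := by rw [hfv]; positivity
    linarith
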